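/- Let 1 ≤ j ≤ k−1 be integers and let V be a finite set. Every internally spanned triple (J0,E1,E2) on V is traversable, and consequently contains an edge-minimal traversable triple: there exist F1 ⊆ E1 and F2 ⊆ E2 such that (J0,F1,F2) is an edge-minimal traversable triple. -/

import Mathlib

open Finset Filter

/-- Two clusters `C`, `C'` of `j`-sets can be merged: they are joined by an edge of `E1` (red)
and an edge of `E2` (blue). -/
def Mergeable {V : Type*} [DecidableEq V] (E1 E2 C C' : Finset (Finset V)) : Prop :=
  (∃ J1 ∈ C, ∃ J1' ∈ C', ∃ e1 ∈ E1, J1 ∪ J1' ⊆ e1) ∧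
  (∃ J2 ∈ C, ∃ J2' ∈ C', ∃ e2 ∈ E2, J2 ∪ J2' ⊆ e2)

/-- One elementary merging step of the jigsaw percolation process on the double hypergraph
`(V, E1, E2)`: two distinct mergeable clusters of the current partition `P` are replaced by
their union.  Iterating such pairwise merges as long as possible yields exactly the final
partition of the (deterministic) jigsaw percolation process. -/
def MergeStep {V : Type*} [DecidableEq V] (E1 E2 : Finset (Finset V))
    (P P' : Finset (Finset (Finset V))) : Prop :=
  ∃ C ∈ P, ∃ C' ∈ P, C ≠ C' ∧ Mergeable E1 E2 C C' ∧
    P' = insert (C ∪ C') ((P.erase C).erase C')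

/-- The family `J0` of `j`-sets percolates on the double hypergraph `(V, E1, E2)`:
starting from the partition of `J0` into singletons, a sequence of merges reaches the
partition with a single class. -/
def PercolatesOn {V : Type*} [DecidableEq V] (J0 E1 E2 : Finset (Finset V)) : Prop :=
  Relation.ReflTransGen (MergeStep E1 E2)
    (J0.image fun J => ({J} : Finset (Finset V))) {J0}

/-- The double `k`-graph `(V, E1, E2)` `j`-percolates: the family of all `j`-element subsets
of `V` percolates on `(V, E1, E2)`. -/
def JPercolates {V : Type*} [DecidableEq V] [Fintype V] (j : ℕ)
    (E1 E2 : Finset (Finset V)) : Prop :=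
  PercolatesOn ((Finset.univ : Finset V).powersetCard j) E1 E2
/-- A subfamily `Jstar ⊆ Jfam` of `j`-sets is `Jfam`-traversable in the `k`-graph `(V, E)`:
for any two distinct `A, B ∈ Jstar` there is a sequence of edges `e_0, …, e_m ∈ E` with
`A ⊆ e_0`, `B ⊆ e_m`, such that the intersection of any two consecutive edges contains some
`j`-set belonging to `Jfam`.  (Singletons are trivially traversable.) -/
def TravIn {V : Type*} [DecidableEq V] (Jfam E Jstar : Finset (Finset V)) : Prop :=
  ∀ A ∈ Jstar, ∀ B ∈ Jstar, A ≠ B →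
    ∃ (m : ℕ) (es : Fin (m + 1) → Finset V),
      (∀ i, es i ∈ E) ∧ A ⊆ es 0 ∧ B ⊆ es (Fin.last m) ∧
      ∀ i : Fin m, ∃ I ∈ Jfam, I ⊆ es i.castSucc ∧ I ⊆ es i.succ

/-- The family `Jfam` is traversable in `(V, E)` if it is `Jfam`-traversable. -/
def Trav {V : Type*} [DecidableEq V] (Jfam E : Finset (Finset V)) : Prop :=
  TravIn Jfam E Jfam

/-- A triple `(J0, E1, E2)` is traversable if `J0` is traversable in both the red `k`-graph
`(V, E1)` and the blue `k`-graph `(V, E2)`. -/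
def TravTriple {V : Type*} [DecidableEq V] (J0 E1 E2 : Finset (Finset V)) : Prop :=
  Trav J0 E1 ∧ Trav J0 E2

/-- A triple `(J0, E1, E2)` is an edge-minimal traversable triple if it is traversable and
removing any edge from `E1` or from `E2` destroys traversability. -/
def EdgeMinTravTriple {V : Type*} [DecidableEq V] (J0 E1 E2 : Finset (Finset V)) : Prop :=
  TravTriple J0 E1 E2 ∧
  (∀ e ∈ E1, ¬ Trav J0 (E1.erase e)) ∧
  (∀ e ∈ E2, ¬ Trav J0 (E2.erase e))

section Aux

variable {V : Type*} [DecidableEq V]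

/-- Two edges are linked if they both lie in `E` and share a `j`-set of `J0`. -/
def LinkRel (J0 E : Finset (Finset V)) (e f : Finset V) : Prop :=
  e ∈ E ∧ f ∈ E ∧ ∃ I ∈ J0, I ⊆ e ∧ I ⊆ f

/-- `A` and `B` are connected: some edge containing `A` is joined by a chain of
linked edges to some edge containing `B`. -/
def Conn (J0 E : Finset (Finset V)) (A B : Finset V) : Prop :=
  ∃ e ∈ E, ∃ f ∈ E, A ⊆ e ∧ B ⊆ f ∧ Relation.ReflTransGen (LinkRel J0 E) e f

lemma LinkRel.symm' {J0 E : Finset (Finset V)} {e f : Finset V}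
    (h : LinkRel J0 E e f) : LinkRel J0 E f e := by
  obtain ⟨he, hf, I, hI, h1, h2⟩ := h
  exact ⟨hf, he, I, hI, h2, h1⟩

lemma Conn.symm {J0 E : Finset (Finset V)} {A B : Finset V}
    (h : Conn J0 E A B) : Conn J0 E B A := by
  obtain ⟨e, he, f, hf, hA, hB, hc⟩ := h
  refine ⟨f, hf, e, he, hB, hA, ?_⟩
  exact (@Relation.ReflTransGen.symmetric _ _ ⟨fun _ _ h => h.symm'⟩).symm _ _ hc

lemma Conn.trans' {J0 E : Finset (Finset V)} {A B C : Finset V}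
    (hB : B ∈ J0) (h1 : Conn J0 E A B) (h2 : Conn J0 E B C) : Conn J0 E A C := by
  obtain ⟨e, he, f, hf, hA, hB1, hc1⟩ := h1
  obtain ⟨e', he', f', hf', hB2, hC, hc2⟩ := h2
  refine ⟨e, he, f', hf', hA, hC, ?_⟩
  exact (hc1.tail ⟨hf, he', B, hB, hB1, hB2⟩).trans hc2

/-- Convert a chain of linked edges into a `Fin`-indexed sequence. -/
lemma chain_to_seq {J0 E : Finset (Finset V)} {e f : Finset V}
    (h : Relation.ReflTransGen (LinkRel J0 E) e f) (he : e ∈ E) :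
    ∃ m, ∃ es : Fin (m + 1) → Finset V, (∀ i, es i ∈ E) ∧ es 0 = e ∧
      es (Fin.last m) = f ∧
      ∀ i : Fin m, ∃ I ∈ J0, I ⊆ es i.castSucc ∧ I ⊆ es i.succ := by
  induction h with
  | refl => exact ⟨0, fun _ => e, fun _ => he, rfl, rfl, fun i => i.elim0⟩
  | @tail b c hab hbc ih =>
    obtain ⟨m, es, hmem, h0, hl, hstep⟩ := ih
    refine ⟨m + 1, fun i => if h : i.val ≤ m then es ⟨i.val, by omega⟩ else c,
      ?_, ?_, ?_, ?_⟩
    · intro i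
      by_cases h : i.val ≤ m
      · simpa [h] using hmem _
      · simpa [h] using hbc.2.1
    · simpa using h0
    · simp [Fin.last]
    · intro i
      have hcast : (i.castSucc : Fin (m + 2)).val = i.val := rfl
      have hsucc : (i.succ : Fin (m + 2)).val = i.val + 1 := rfl
      by_cases h : i.val < m
      · obtain ⟨I, hI, h1, h2⟩ := hstep ⟨i.val, h⟩
        refine ⟨I, hI, ?_, ?_⟩
        · have : i.val ≤ m := by omega
          simpa [hcast, this] using h1
        · have : i.val + 1 ≤ m := by omega
          simpa [hsucc, this] using h2
      · have him : i.val = m := by omega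
        obtain ⟨I, hI, h1, h2⟩ := hbc.2.2
        refine ⟨I, hI, ?_, ?_⟩
        · have hle : i.val ≤ m := by omega
          have : es ⟨i.val, by omega⟩ = b := by
            rw [← hl]; congr 1; exact Fin.ext him
          simpa [hcast, hle, this] using h1
        · have : ¬ (i.val + 1 ≤ m) := by omega
          simpa [hsucc, this] using h2

lemma conn_to_trav {J0 E : Finset (Finset V)}
    (h : ∀ A ∈ J0, ∀ B ∈ J0, A ≠ B → Conn J0 E A B) : Trav J0 E := by
  intro A hA B hB hAB
  obtain ⟨e, he, f, hf, hAe, hBf, hc⟩ := h A hA B hB hAB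
  obtain ⟨m, es, hmem, h0, hl, hstep⟩ := chain_to_seq hc he
  exact ⟨m, es, hmem, h0 ▸ hAe, hl ▸ hBf, hstep⟩

/-- The invariant maintained by the percolation process. -/
def PercInv (J0 E1 E2 : Finset (Finset V)) (P : Finset (Finset (Finset V))) : Prop :=
  ∀ C ∈ P, C ⊆ J0 ∧
    ∀ A ∈ C, ∀ B ∈ C, A ≠ B → Conn J0 E1 A B ∧ Conn J0 E2 A B

lemma conn_within {J0 E C : Finset (Finset V)} (hC : C ⊆ J0)
    (hconn : ∀ A ∈ C, ∀ B ∈ C, A ≠ B → Conn J0 E A B)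
    {J A : Finset V} (hJ : J ∈ C) (hA : A ∈ C) {e : Finset V}
    (he : e ∈ E) (hJe : J ⊆ e) : Conn J0 E A J := by
  by_cases h : A = J
  · exact ⟨e, he, e, he, h ▸ hJe, hJe, Relation.ReflTransGen.refl⟩
  · exact hconn A hA J hJ h

lemma conn_merge {J0 E C C' : Finset (Finset V)} (hC : C ⊆ J0) (hC' : C' ⊆ J0)
    (hconn : ∀ A ∈ C, ∀ B ∈ C, A ≠ B → Conn J0 E A B)
    (hconn' : ∀ A ∈ C', ∀ B ∈ C', A ≠ B → Conn J0 E A B)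
    {J J' e : Finset V} (hJ : J ∈ C) (hJ' : J' ∈ C') (he : e ∈ E)
    (hJe : J ⊆ e) (hJ'e : J' ⊆ e) :
    ∀ A ∈ C ∪ C', ∀ B ∈ C ∪ C', A ≠ B → Conn J0 E A B := by
  have cross : ∀ A ∈ C, ∀ B ∈ C', Conn J0 E A B := by
    intro A hA B hB
    have h1 : Conn J0 E A J := conn_within hC hconn hJ hA he hJe
    have h2 : Conn J0 E J J' :=
      ⟨e, he, e, he, hJe, hJ'e, Relation.ReflTransGen.refl⟩
    have h3 : Conn J0 E J' B := (conn_within hC' hconn' hJ' hB he hJ'e).symm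
    exact (h1.trans' (hC hJ) h2).trans' (hC' hJ') h3
  intro A hA B hB hAB
  rcases Finset.mem_union.1 hA with hA | hA <;>
    rcases Finset.mem_union.1 hB with hB | hB
  · exact hconn A hA B hB hAB
  · exact cross A hA B hB
  · exact (cross B hB A hA).symm
  · exact hconn' A hA B hB hAB

lemma inv_step {J0 E1 E2 : Finset (Finset V)} {P P' : Finset (Finset (Finset V))}
    (hP : PercInv J0 E1 E2 P) (hstep : MergeStep E1 E2 P P') : PercInv J0 E1 E2 P' := by
  obtain ⟨C, hC, C', hC', hne, ⟨⟨J1, hJ1, J1', hJ1', e1, he1, hsub1⟩,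
    ⟨J2, hJ2, J2', hJ2', e2, he2, hsub2⟩⟩, hP'⟩ := hstep
  intro D hD
  rw [hP'] at hD
  rcases Finset.mem_insert.1 hD with hD | hD
  · subst hD
    obtain ⟨hCs, hCc⟩ := hP C hC
    obtain ⟨hC's, hC'c⟩ := hP C' hC'
    refine ⟨Finset.union_subset hCs hC's, ?_⟩
    have h1 := conn_merge hCs hC's (fun A hA B hB h => (hCc A hA B hB h).1)
      (fun A hA B hB h => (hC'c A hA B hB h).1) hJ1 hJ1' he1
      ((Finset.union_subset_iff.1 hsub1).1) ((Finset.union_subset_iff.1 hsub1).2)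
    have h2 := conn_merge hCs hC's (fun A hA B hB h => (hCc A hA B hB h).2)
      (fun A hA B hB h => (hC'c A hA B hB h).2) hJ2 hJ2' he2
      ((Finset.union_subset_iff.1 hsub2).1) ((Finset.union_subset_iff.1 hsub2).2)
    exact fun A hA B hB h => ⟨h1 A hA B hB h, h2 A hA B hB h⟩
  · exact hP D (Finset.mem_of_mem_erase (Finset.mem_of_mem_erase hD))

/-- Generic minimization: any set with a property contains a subset with the
property from which no element can be removed. -/
lemma exists_erase_minimal {α : Type*} [DecidableEq α] (P : Finset α → Prop) :
    ∀ E : Finset α, P E → ∃ F ⊆ E, P F ∧ ∀ e ∈ F, ¬ P (F.erase e) := by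
  intro E
  induction E using Finset.strongInduction with
  | _ E ih =>
    intro hE
    by_cases h : ∀ e ∈ E, ¬ P (E.erase e)
    · exact ⟨E, subset_rfl, hE, h⟩
    · push_neg at h
      obtain ⟨e, he, hPe⟩ := h
      obtain ⟨F, hF, hPF, hmin⟩ := ih (E.erase e) (Finset.erase_ssubset he) hPe
      exact ⟨F, hF.trans (Finset.erase_subset _ _), hPF, hmin⟩

end Aux

/-- **Fact.** Every internally spanned triple `(J0, E1, E2)` (i.e. one where `J0` percolates
on `(V, E1, E2)`) is traversable, and consequently contains an edge-minimal traversable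
triple: there are `F1 ⊆ E1` and `F2 ⊆ E2` such that `(J0, F1, F2)` is an edge-minimal
traversable triple. -/
theorem internally_spanned_traversable (k j : ℕ) (hj : 1 ≤ j) (hjk : j ≤ k - 1)
    (V : Type*) [DecidableEq V] [Fintype V]
    (J0 E1 E2 : Finset (Finset V))
    (hJ0 : J0 ⊆ (Finset.univ : Finset V).powersetCard j)
    (hE1 : E1 ⊆ (Finset.univ : Finset V).powersetCard k)
    (hE2 : E2 ⊆ (Finset.univ : Finset V).powersetCard k)
    (hspan : PercolatesOn J0 E1 E2) :
    TravTriple J0 E1 E2 ∧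
      ∃ F1 ⊆ E1, ∃ F2 ⊆ E2, EdgeMinTravTriple J0 F1 F2 := by
  -- Initial partition satisfies the invariant.
  have hinit : PercInv J0 E1 E2 (J0.image fun J => ({J} : Finset (Finset V))) := by
    intro C hC
    obtain ⟨J, hJ, rfl⟩ := Finset.mem_image.1 hC
    refine ⟨by simpa using hJ, ?_⟩
    intro A hA B hB hAB
    rw [Finset.mem_singleton] at hA hB
    exact absurd (hA.trans hB.symm) hAB
  -- The invariant is preserved along the percolation run.
  have hfin : PercInv J0 E1 E2 {J0} := by
    have : ∀ {P Q : Finset (Finset (Finset V))},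
        Relation.ReflTransGen (MergeStep E1 E2) P Q →
        PercInv J0 E1 E2 P → PercInv J0 E1 E2 Q := by
      intro P Q h
      induction h with
      | refl => exact id
      | tail _ hstep ih => exact fun hI => inv_step (ih hI) hstep
    exact this hspan hinit
  obtain ⟨-, hconn⟩ := hfin J0 (Finset.mem_singleton_self J0)
  have htrav : TravTriple J0 E1 E2 := by
    constructor
    · exact conn_to_trav fun A hA B hB h => (hconn A hA B hB h).1
    · exact conn_to_trav fun A hA B hB h => (hconn A hA B hB h).2
  refine ⟨htrav, ?_⟩
  obtain ⟨F1, hF1, hTF1, hmin1⟩ := exists_erase_minimal (Trav J0) E1 htrav.1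
  obtain ⟨F2, hF2, hTF2, hmin2⟩ := exists_erase_minimal (Trav J0) E2 htrav.2
  exact ⟨F1, hF1, F2, hF2, ⟨hTF1, hTF2⟩, hmin1, hmin2⟩
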